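/- Let P be a probability measure on ℝ, τ ∈ (0,1), and Φ(q) = ∫_ℝ (ρ_τ(x - q) - ρ_τ(x)) dP(x). Then Φ(q) → +∞ as |q| → +∞ (Φ is coercive). -/

import Mathlib

open MeasureTheory Filter

noncomputable def rho (τ : ℝ) (x : ℝ) : ℝ := if x ≤ 0 then (τ - 1) * x else τ * x

lemma rho_eq_max (τ x : ℝ) : rho τ x = max ((τ - 1) * x) (τ * x) := by
  unfold rho
  rcases le_or_gt x 0 with h | h
  · rw [if_pos h, max_eq_left (by nlinarith)]
  · rw [if_neg (not_le.2 h), max_eq_right (by nlinarith)]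

lemma rho_continuous (τ : ℝ) : Continuous (rho τ) := by
  have : rho τ = fun x => max ((τ - 1) * x) (τ * x) := funext (rho_eq_max τ)
  rw [this]
  exact (continuous_const.mul continuous_id).max (continuous_const.mul continuous_id)

lemma rho_sub_abs_le (τ : ℝ) (hτ : τ ∈ Set.Ioo (0:ℝ) 1) (a b : ℝ) :
    |rho τ a - rho τ b| ≤ |a - b| := by
  obtain ⟨h0, h1⟩ := hτ
  rw [rho_eq_max, rho_eq_max]
  refine le_trans (abs_max_sub_max_le_max _ _ _ _) ?_
  rw [max_le_iff, ← mul_sub, ← mul_sub, abs_mul, abs_mul]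
  constructor
  · rw [abs_of_nonpos (by linarith : τ - 1 ≤ 0)]
    nlinarith [abs_nonneg (a - b)]
  · rw [abs_of_pos h0]
    nlinarith [abs_nonneg (a - b)]

lemma rho_neg (τ a : ℝ) : rho (1 - τ) (-a) = rho τ a := by
  unfold rho
  rcases lt_trichotomy a 0 with h | h | h
  · rw [if_neg (by linarith), if_pos h.le]; ring
  · simp [h]
  · rw [if_pos (by linarith), if_neg (by linarith)]; ring

lemma integrable_g (P : Measure ℝ) [IsProbabilityMeasure P] (τ : ℝ)
    (hτ : τ ∈ Set.Ioo (0:ℝ) 1) (q : ℝ) :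
    Integrable (fun x => rho τ (x - q) - rho τ x) P := by
  have hc : Continuous fun x : ℝ => rho τ (x - q) - rho τ x :=
    ((rho_continuous τ).comp (continuous_id.sub continuous_const)).sub (rho_continuous τ)
  refine ⟨hc.aestronglyMeasurable, ?_⟩
  apply HasFiniteIntegral.of_bounded (C := |q|)
  filter_upwards with x
  have h := rho_sub_abs_le τ hτ (x - q) x
  have h2 : x - q - x = -q := by ring
  rw [h2, abs_neg] at h
  simpa using h

lemma integrable_minmax (P : Measure ℝ) [IsProbabilityMeasure P] (c : ℝ) (hc : 0 ≤ c) :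
    Integrable (fun x => min (max x 0) c) P := by
  have hcont : Continuous fun x : ℝ => min (max x 0) c :=
    (continuous_id.max continuous_const).min continuous_const
  refine ⟨hcont.aestronglyMeasurable, ?_⟩
  apply HasFiniteIntegral.of_bounded (C := c)
  filter_upwards with x
  rw [Real.norm_eq_abs, abs_of_nonneg (le_min (le_max_right x 0) hc)]
  exact min_le_right _ _

lemma pt1 (τ q x : ℝ) (hτ : τ ∈ Set.Ioo (0:ℝ) 1) (hq : 0 ≤ q) :
    (1 - τ) * q - min (max x 0) q ≤ rho τ (x - q) - rho τ x := by
  obtain ⟨h0, h1⟩ := hτ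
  unfold rho
  rcases le_total x 0 with hx | hx
  · rw [max_eq_right hx, min_eq_left hq, if_pos (by linarith : x - q ≤ 0), if_pos hx]
    nlinarith
  · rw [max_eq_left hx]
    rcases le_total x q with hxq | hxq
    · rw [min_eq_left hxq, if_pos (by linarith : x - q ≤ 0)]
      split_ifs with hB <;> nlinarith
    · rw [min_eq_right hxq]
      split_ifs with hA hB hB <;> nlinarith

lemma pt2 (q M x : ℝ) (hq : 0 ≤ q) (hM : 0 ≤ M) :
    min (max x 0) q ≤ min (max x 0) M + (Set.Ioi M).indicator (fun _ => q) x := by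
  rcases le_or_gt x M with h | h
  · rw [Set.indicator_of_notMem (by simpa using h), add_zero]
    rw [min_eq_left (max_le h hM)]
    exact min_le_left _ _
  · rw [Set.indicator_of_mem (by simpa using h)]
    have : 0 ≤ min (max x 0) M := le_min (le_max_right x 0) hM
    linarith [min_le_right (max x 0) q]

lemma key (P : Measure ℝ) [IsProbabilityMeasure P] (τ : ℝ) (hτ : τ ∈ Set.Ioo (0:ℝ) 1) :
    Filter.Tendsto (fun q : ℝ => ∫ x, (rho τ (x - q) - rho τ x) ∂P)
      Filter.atTop Filter.atTop := by
  obtain ⟨h0, h1⟩ := hτ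
  -- choose M with small tail
  have htail : Filter.Tendsto (fun M : ℝ => P (Set.Ioi M)) Filter.atTop (nhds 0) := by
    have h := tendsto_measure_iInter_atTop (μ := P) (s := fun M : ℝ => Set.Ioi M)
      (fun M => measurableSet_Ioi.nullMeasurableSet)
      (fun a b hab => Set.Ioi_subset_Ioi hab) ⟨0, measure_ne_top _ _⟩
    have hempty : ⋂ M : ℝ, Set.Ioi M = ∅ := by
      ext x
      simp only [Set.mem_iInter, Set.mem_Ioi, Set.mem_empty_iff_false, iff_false, not_forall,
        not_lt]
      exact ⟨x, le_refl x⟩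
    rw [hempty, measure_empty] at h
    exact h
  have hε : (0:ENNReal) < ENNReal.ofReal ((1 - τ) / 2) := by
    rw [ENNReal.ofReal_pos]; linarith
  obtain ⟨M, hM0, hMε⟩ : ∃ M : ℝ, 0 ≤ M ∧ (P (Set.Ioi M)).toReal ≤ (1 - τ) / 2 := by
    have h := (htail.eventually_lt_const hε).and (Filter.eventually_ge_atTop (0:ℝ))
    obtain ⟨M, hlt, hM0⟩ := h.exists
    exact ⟨M, hM0, ENNReal.toReal_le_of_le_ofReal (by linarith) hlt.le⟩
  -- eventual lower bound
  refine Filter.tendsto_atTop_mono' Filter.atTop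
    (f₁ := fun q : ℝ => (1 - τ) / 2 * q - M) ?_ ?_
  · filter_upwards [Filter.eventually_ge_atTop (0:ℝ)] with q hq
    have i1 : Integrable (fun x => min (max x 0) q) P := integrable_minmax P q hq
    have i2 : Integrable (fun x => min (max x 0) M) P := integrable_minmax P M hM0
    have i3 : Integrable ((Set.Ioi M).indicator fun _ : ℝ => q) P :=
      (integrable_const q).indicator measurableSet_Ioi
    have step1 : ∫ x, ((1 - τ) * q - min (max x 0) q) ∂P
        ≤ ∫ x, (rho τ (x - q) - rho τ x) ∂P :=
      integral_mono ((integrable_const _).sub i1) (integrable_g P τ ⟨h0, h1⟩ q)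
        (fun x => pt1 τ q x ⟨h0, h1⟩ hq)
    have step2 : ∫ x, ((1 - τ) * q - min (max x 0) q) ∂P
        = (1 - τ) * q - ∫ x, min (max x 0) q ∂P := by
      rw [integral_sub (integrable_const _) i1, integral_const]
      simp
    have step3 : ∫ x, min (max x 0) q ∂P
        ≤ ∫ x, (min (max x 0) M + (Set.Ioi M).indicator (fun _ => q) x) ∂P :=
      integral_mono i1 (i2.add i3) (fun x => pt2 q M x hq hM0)
    have step4 : ∫ x, (min (max x 0) M + (Set.Ioi M).indicator (fun _ => q) x) ∂P
        = (∫ x, min (max x 0) M ∂P) + (P (Set.Ioi M)).toReal * q := by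
      rw [integral_add i2 i3, integral_indicator_const q measurableSet_Ioi, smul_eq_mul, measureReal_def]
    have step5 : ∫ x, min (max x 0) M ∂P ≤ M := by
      calc ∫ x, min (max x 0) M ∂P ≤ ∫ _x : ℝ, M ∂P :=
            integral_mono i2 (integrable_const M) (fun x => min_le_right _ _)
        _ = M := by simp
    have step6 : (P (Set.Ioi M)).toReal * q ≤ (1 - τ) / 2 * q :=
      mul_le_mul_of_nonneg_right hMε hq
    have := step2 ▸ step1
    linarith [step3, step4 ▸ step3]
  · apply Filter.tendsto_atTop_add_const_right
    exact Filter.Tendsto.const_mul_atTop (by linarith) Filter.tendsto_id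

theorem stmt11 (P : Measure ℝ) [IsProbabilityMeasure P] (τ : ℝ) (hτ : τ ∈ Set.Ioo (0:ℝ) 1) :
    Filter.Tendsto (fun q : ℝ => ∫ x, (rho τ (x - q) - rho τ x) ∂P)
      (Filter.cocompact ℝ) Filter.atTop := by
  obtain ⟨h0, h1⟩ := hτ
  rw [cocompact_eq_atBot_atTop, Filter.tendsto_sup]
  constructor
  · -- atBot
    haveI : IsProbabilityMeasure (P.map Neg.neg) :=
      Measure.isProbabilityMeasure_map measurable_neg.aemeasurable
    have h1τ : (1 - τ) ∈ Set.Ioo (0:ℝ) 1 := ⟨by linarith, by linarith⟩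
    have hkey := key (P.map Neg.neg) (1 - τ) h1τ
    have heq : ∀ q : ℝ, ∫ x, (rho τ (x - q) - rho τ x) ∂P
        = ∫ y, (rho (1 - τ) (y - (-q)) - rho (1 - τ) y) ∂(P.map Neg.neg) := by
      intro q
      have hmeas : AEStronglyMeasurable (fun y : ℝ => rho (1 - τ) (y - -q) - rho (1 - τ) y)
          (P.map Neg.neg) := by
        apply Continuous.aestronglyMeasurable
        exact ((rho_continuous _).comp (continuous_id.sub continuous_const)).sub
          (rho_continuous _)
      rw [integral_map measurable_neg.aemeasurable hmeas]
      refine integral_congr_ae (Filter.Eventually.of_forall fun x => ?_)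
      have h1 : Neg.neg x - -q = -(x - q) := by ring
      show rho τ (x - q) - rho τ x = rho (1 - τ) (Neg.neg x - -q) - rho (1 - τ) (Neg.neg x)
      rw [h1, rho_neg, rho_neg]
    have hrw : (fun q : ℝ => ∫ x, (rho τ (x - q) - rho τ x) ∂P)
        = (fun q : ℝ => ∫ y, (rho (1 - τ) (y - (-q)) - rho (1 - τ) y) ∂(P.map Neg.neg)) :=
      funext heq
    rw [hrw]
    exact hkey.comp tendsto_neg_atBot_atTop
  · exact key P τ ⟨h0, h1⟩
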